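/- arXiv:0810.2945 — 2 statements merged into one kernel-verified Lean document; each statement's English description precedes it below -/
import Mathlib

section
/- Let V be a finite-dimensional vector space over ℚ with a nondegenerate symmetric bilinear form ⟨·,·⟩ and let δ ∈ V be a nonzero isotropic vector, i.e., δ ≠ 0 and ⟨δ,δ⟩ = 0. If f is an isometry of V that restricts to the identity on the orthogonal complement δ^⊥, then f = id. (Thus an isometry defined on the complement of an isotropic vector has at most one extension to V.) -/
/-- Let `V` be a finite-dimensional vector space over `ℚ` with a
nondegenerate symmetric bilinear form `B` and let `δ ∈ V` be a nonzero isotropic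
vector (`δ ≠ 0`, `B δ δ = 0`). If `f` is an isometry of `V` that restricts to the
identity on `δ^⊥`, then `f = id`. -/
theorem isometry_fixing_isotropic_orthogonal_complement
    {V : Type*} [AddCommGroup V] [Module ℚ V] [FiniteDimensional ℚ V]
    (B : LinearMap.BilinForm ℚ V) (hB : B.Nondegenerate)
    (hsymm : ∀ x y : V, B x y = B y x)
    (δ : V) (hδ0 : δ ≠ 0) (hδ : B δ δ = 0)
    (f : V ≃ₗ[ℚ] V) (hf : ∀ x y : V, B (f x) (f y) = B x y)
    (hfix : ∀ x : V, B x δ = 0 → f x = x) :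
    ∀ x : V, f x = x := by
  -- δ is fixed
  have hfδ : f δ = δ := hfix δ hδ
  -- find v with B v δ = 1
  obtain ⟨w, hw⟩ : ∃ w, B δ w ≠ 0 := by
    by_contra h
    push_neg at h
    exact hδ0 (hB.1 δ h)
  set v : V := (B δ w)⁻¹ • w with hv
  have hvδ : B v δ = 1 := by
    rw [hv, hsymm, map_smul]
    simp [inv_mul_cancel₀ hw]
  -- f v - v is orthogonal to all of δ^⊥
  have horth : ∀ y : V, B y δ = 0 → B (f v - v) y = 0 := by
    intro y hy
    have h1 : B (f v) (f y) = B v y := hf v y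
    rw [hfix y hy] at h1
    simp [map_sub, LinearMap.sub_apply, h1]
  -- hence f v - v ∈ span {δ}
  have hspan : ∃ c : ℚ, f v - v = c • δ := by
    set φ : V →ₗ[ℚ] ℚ := B.flip δ with hφ
    set K : V →ₗ[ℚ] ℚ := B (f v - v) with hK
    have hker : ⨅ _ : Unit, LinearMap.ker φ ≤ LinearMap.ker K := by
      intro y hy
      simp only [Submodule.mem_iInf, LinearMap.mem_ker] at hy ⊢
      exact horth y (hy ())
    have hmem := FiniteDimensional.mem_span_of_iInf_ker_le_ker hker
    have : K ∈ Submodule.span ℚ {φ} := by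
      simpa [Set.range_const] using hmem
    obtain ⟨c, hc⟩ := Submodule.mem_span_singleton.1 this
    refine ⟨c, ?_⟩
    have hall : ∀ y : V, B (f v - v - c • δ) y = 0 := by
      intro y
      have hKy : B (f v - v) y = c * B y δ := (LinearMap.congr_fun hc y).symm
      simp only [map_sub, map_smul, LinearMap.sub_apply, LinearMap.smul_apply,
        smul_eq_mul] at hKy ⊢
      rw [hsymm y δ] at hKy
      linarith
    have := hB.1 _ hall
    rwa [sub_eq_zero] at this
  obtain ⟨c, hc⟩ := hspan
  -- norm condition forces c = 0
  have hnorm : B (f v) (f v) = B v v := hf v v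
  have hfv : f v = v + c • δ := by rw [← hc]; abel
  have hc0 : c = 0 := by
    rw [hfv] at hnorm
    simp only [map_add, map_smul, LinearMap.add_apply, LinearMap.smul_apply, smul_eq_mul] at hnorm
    rw [hsymm δ v, hvδ, hδ] at hnorm
    nlinarith
  rw [hc0, zero_smul, add_zero] at hfv
  -- decompose arbitrary x
  intro x
  have hx0 : B (x - (B x δ) • v) δ = 0 := by
    simp [map_sub, map_smul, hvδ]
  have := hfix _ hx0
  have hfx : f x - (B x δ) • f v = x - (B x δ) • v := by
    simpa [map_sub, map_smul] using this
  rw [hfv] at hfx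
  rwa [sub_left_inj] at hfx
end

section
/- Let L be a hyperbolic lattice of rank 2 that contains a nonzero isotropic element, i.e., some x ∈ L with x ≠ 0 and x² = 0. Then the group O(L) is finite. -/
/-- A nondegenerate symmetric bilinear form `B` on a lattice `L` is *hyperbolic*
(of signature `(1, n−1)` on `L ⊗ ℝ`) iff there is `v ∈ L` with `v² > 0` such that
`B` is negative definite on the orthogonal complement of `v` in `L`. -/
def IsHyperbolicLat {L : Type*} [AddCommGroup L] [Module ℤ L]
    (B : L →ₗ[ℤ] L →ₗ[ℤ] ℤ) : Prop :=
  ∃ v : L, 0 < B v v ∧ ∀ x : L, B v x = 0 → x ≠ 0 → B x x < 0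

/-- Let `L` be a hyperbolic lattice of rank 2 that contains a
nonzero isotropic element, i.e. some `x ∈ L` with `x ≠ 0` and `x² = 0`. Then the
group `O(L)` of automorphisms of `L` preserving the form is finite. -/
theorem rank_two_isotropic_finite_orthogonal_group
    {L : Type*} [AddCommGroup L] [Module ℤ L] [Module.Free ℤ L] [Module.Finite ℤ L]
    (B : L →ₗ[ℤ] L →ₗ[ℤ] ℤ)
    (hnd : ∀ x : L, (∀ y : L, B x y = 0) → x = 0)
    (hsymm : ∀ x y : L, B x y = B y x)
    (hrank : Module.finrank ℤ L = 2)
    (hhyp : IsHyperbolicLat B)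
    (x₀ : L) (hx₀ : x₀ ≠ 0) (hiso : B x₀ x₀ = 0) :
    {f : L ≃ₗ[ℤ] L | ∀ x y : L, B (f x) (f y) = B x y}.Finite := by
  classical
  obtain ⟨y, hy⟩ : ∃ y, B x₀ y ≠ 0 := by
    by_contra h
    push_neg at h
    exact hx₀ (hnd x₀ h)
  set d : ℤ := B x₀ y with hd
  set e₂ : L := (2 * d) • y - (B y y) • x₀ with he₂
  set c : ℤ := 2 * d ^ 2 with hc'
  have hc : c ≠ 0 := mul_ne_zero two_ne_zero (pow_ne_zero 2 hy)
  have hB12 : B x₀ e₂ = c := by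
    rw [he₂]
    simp [hiso, ← hd, hc']
    ring
  have hB22 : B e₂ e₂ = 0 := by
    rw [he₂]
    simp [hiso, hsymm y x₀, ← hd]
    ring
  have hB21 : B e₂ x₀ = c := by rw [hsymm]; exact hB12
  -- transfer: equality of all pairings implies equality
  have htrans : ∀ u v : L, (∀ w : L, B w u = B w v) → u = v := by
    intro u v h
    have : u - v = 0 := by
      apply hnd
      intro z
      rw [hsymm, map_sub, h z, sub_self]
    rw [← sub_eq_zero]; exact this
  -- every element of L is rationally in the span of x₀, e₂
  have hspan : ∀ z : L, ∃ n p q : ℤ, n ≠ 0 ∧ n • z = p • x₀ + q • e₂ := by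
    intro z
    by_contra hcon
    push_neg at hcon
    have hli : LinearIndependent ℤ ![z, x₀, e₂] := by
      rw [Fintype.linearIndependent_iff]
      intro g hg
      rw [Fin.sum_univ_three] at hg
      simp only [Matrix.cons_val_zero, Matrix.cons_val_one, Matrix.head_cons,
        Matrix.cons_val_two, Matrix.tail_cons] at hg
      have h0 : g 0 = 0 := by
        by_contra h0
        apply hcon (g 0) (-(g 1)) (-(g 2)) h0
        apply htrans
        intro w
        have hw := congrArg (B w) hg
        simp only [map_add, map_smul, smul_eq_mul, map_zero] at hw
        simp only [map_add, map_zsmul, zsmul_eq_mul, map_neg, Int.cast_id]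
        push_cast
        linarith
      have h1 : g 1 = 0 := by
        have hw := congrArg (B e₂) hg
        simp only [map_add, map_smul, smul_eq_mul, map_zero, h0, zero_mul,
          hB21, hB22, mul_zero, add_zero, zero_add] at hw
        exact (mul_eq_zero.mp hw).resolve_right hc
      have h2 : g 2 = 0 := by
        have hw := congrArg (B x₀) hg
        simp only [map_add, map_smul, smul_eq_mul, map_zero, h0, h1, zero_mul,
          hiso, hB12, mul_zero, add_zero, zero_add] at hw
        exact (mul_eq_zero.mp hw).resolve_right hc
      intro i
      fin_cases i
      · exact h0
      · exact h1
      · exact h2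
    have hcard := hli.fintype_card_le_finrank
    rw [hrank] at hcard
    simp at hcard
  -- orthogonality to x₀ and e₂ forces zero
  have hker : ∀ w : L, B x₀ w = 0 → B e₂ w = 0 → w = 0 := by
    intro w h1 h2
    apply hnd
    intro z
    obtain ⟨n, p, q, hn, hz⟩ := hspan z
    have hw1 : B w x₀ = 0 := by rw [hsymm]; exact h1
    have hw2 : B w e₂ = 0 := by rw [hsymm]; exact h2
    have h := congrArg (B w) hz
    have h' : n * B w z = 0 := by simpa [hw1, hw2] using h
    exact (mul_eq_zero.mp h').resolve_left hn
  -- determination by coordinates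
  have hdet : ∀ u v : L, B x₀ u = B x₀ v → B e₂ u = B e₂ v → u = v := by
    intro u v h1 h2
    have h : u - v = 0 := by
      apply hker
      · rw [map_sub, h1, sub_self]
      · rw [map_sub, h2, sub_self]
    rw [← sub_eq_zero]; exact h
  -- universal coordinate identity
  have hid : ∀ u : L, c • u = (B e₂ u) • x₀ + (B x₀ u) • e₂ := by
    intro u
    have h1 : B x₀ ((B e₂ u) • x₀ + (B x₀ u) • e₂ - c • u) = 0 := by
      have h : B x₀ ((B e₂ u) • x₀ + (B x₀ u) • e₂ - c • u)
          = B e₂ u * B x₀ x₀ + B x₀ u * B x₀ e₂ - c * B x₀ u := by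
        simp [map_sub, map_add]
      rw [h, hiso, hB12]
      ring
    have h2 : B e₂ ((B e₂ u) • x₀ + (B x₀ u) • e₂ - c • u) = 0 := by
      have h : B e₂ ((B e₂ u) • x₀ + (B x₀ u) • e₂ - c • u)
          = B e₂ u * B e₂ x₀ + B x₀ u * B e₂ e₂ - c * B e₂ u := by
        simp [map_sub, map_add]
      rw [h, hB21, hB22]
      ring
    have h := hker _ h1 h2
    rw [sub_eq_zero] at h
    exact h.symm
  -- integer form of the identity
  have hidB : ∀ u z : L, c * B z u = B e₂ u * B z x₀ + B x₀ u * B z e₂ := by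
    intro u z
    have h := congrArg (B z) (hid u)
    simpa [map_add] using h
  -- isotropic vectors have a vanishing coordinate product
  have hprod : ∀ u : L, B u u = 0 → B x₀ u * B e₂ u = 0 := by
    intro u hu
    have h := hidB u u
    rw [hu, mul_zero, hsymm u x₀, hsymm u e₂] at h
    have h2 : 2 * (B x₀ u * B e₂ u) = 0 := by linarith
    omega
  -- pairing identity
  have hpair : ∀ u v : L, B u v = c →
      c * c = B e₂ u * B x₀ v + B x₀ u * B e₂ v := by
    intro u v huv
    have h := hidB u v
    rw [hsymm v u, huv, hsymm v x₀, hsymm v e₂] at h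
    exact h
  -- the finite target set
  set D : Set ℤ := {n : ℤ | n = 0 ∨ n ∣ c * c} with hD
  have hDfin : D.Finite := by
    apply Set.Finite.subset (Set.finite_Icc (-(c * c)) (c * c))
    rintro n (rfl | hn)
    · have : (0 : ℤ) < c * c := by positivity
      constructor <;> omega
    · have hcpos : (0 : ℤ) < c * c := by positivity
      have hle1 : n ≤ c * c := Int.le_of_dvd hcpos hn
      have hle2 : -n ≤ c * c := Int.le_of_dvd hcpos ((neg_dvd).mpr hn)
      exact ⟨by linarith, hle1⟩
  set Φ : (L ≃ₗ[ℤ] L) → (ℤ × ℤ) × ℤ × ℤ :=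
    fun f => ((B x₀ (f x₀), B e₂ (f x₀)), (B x₀ (f e₂), B e₂ (f e₂))) with hΦ
  apply Set.Finite.of_finite_image (f := Φ)
  · -- the image is finite
    apply Set.Finite.subset ((hDfin.prod hDfin).prod (hDfin.prod hDfin))
    rintro _ ⟨f, hf, rfl⟩
    simp only [Set.mem_setOf_eq] at hf
    have huu : B (f x₀) (f x₀) = 0 := by rw [hf]; exact hiso
    have hvv : B (f e₂) (f e₂) = 0 := by rw [hf]; exact hB22
    have huv : B (f x₀) (f e₂) = c := by rw [hf]; exact hB12
    have hsum := hpair _ _ huv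
    have hu0 := hprod _ huu
    have hv0 := hprod _ hvv
    simp only [hΦ, Set.mem_prod, hD, Set.mem_setOf_eq]
    refine ⟨⟨?_, ?_⟩, ?_, ?_⟩
    · rcases mul_eq_zero.mp hu0 with h | h
      · exact Or.inl h
      · refine Or.inr ?_
        rw [h, zero_mul, zero_add] at hsum
        rw [hsum]
        exact dvd_mul_right _ _
    · rcases mul_eq_zero.mp hu0 with h | h
      · refine Or.inr ?_
        rw [h, zero_mul, add_zero] at hsum
        rw [hsum]
        exact dvd_mul_right _ _
      · exact Or.inl h
    · rcases mul_eq_zero.mp hv0 with h | h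
      · exact Or.inl h
      · refine Or.inr ?_
        rw [h, mul_zero, add_zero] at hsum
        rw [hsum]
        exact dvd_mul_left _ _
    · rcases mul_eq_zero.mp hv0 with h | h
      · refine Or.inr ?_
        rw [h, mul_zero, zero_add] at hsum
        rw [hsum]
        exact dvd_mul_left _ _
      · exact Or.inl h
  · -- injectivity on the set
    intro f hf g hg hfg
    simp only [Set.mem_setOf_eq] at hf hg
    simp only [hΦ, Prod.mk.injEq] at hfg
    obtain ⟨⟨a1, a2⟩, b1, b2⟩ := hfg
    have h1 : f x₀ = g x₀ := hdet _ _ a1 a2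
    have h2 : f e₂ = g e₂ := hdet _ _ b1 b2
    -- a version of hker relative to the images f x₀, f e₂
    have hker' : ∀ w : L, B (f x₀) w = 0 → B (f e₂) w = 0 → w = 0 := by
      intro w hw1 hw2
      apply hnd
      intro z
      obtain ⟨n, p, q, hn, hz⟩ := hspan (f.symm z)
      have hz' : n • z = p • (f x₀) + q • (f e₂) := by
        have := congrArg f hz
        simpa [map_add, map_zsmul] using this
      have hww1 : B w (f x₀) = 0 := by rw [hsymm]; exact hw1
      have hww2 : B w (f e₂) = 0 := by rw [hsymm]; exact hw2
      have h := congrArg (B w) hz'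
      have h' : n * B w z = 0 := by simpa [hww1, hww2] using h
      exact (mul_eq_zero.mp h').resolve_left hn
    ext z
    have e1 : B (f x₀) (f z) = B (f x₀) (g z) := by
      rw [hf x₀ z, h1, hg x₀ z]
    have e2 : B (f e₂) (f z) = B (f e₂) (g z) := by
      rw [hf e₂ z, h2, hg e₂ z]
    have hsub : f z - g z = 0 := by
      apply hker'
      · rw [map_sub, e1, sub_self]
      · rw [map_sub, e2, sub_self]
    rw [← sub_eq_zero]; exact hsub
end
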